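/- For the two-vertex spatial Moran process, if c and r are not simultaneously equal to 1 and a ∈ [min(1,r)/(r+1), max(1,r)/(r+1)], then choosing the selection parameter m = (a(r+1) − r)/(a(r+1)(1−c) + c − r) yields fixation probability exactly r/(r+1), the Moran fixation probability. -/

import Mathlib

/-- For the two-vertex spatial Moran process with fixation probability
`F(m,a | c,r) = r·a·(1−m)/(m·c + r(1−m)) + r·m·(1−a)/((1−m)/c + r·m)`, if `c` and `r` are not
simultaneously equal to `1` and `a ∈ [min(1,r)/(r+1), max(1,r)/(r+1)]`, then choosing the
selection parameter `m = (a(r+1) − r)/(a(r+1)(1−c) + c − r)` yields fixation probability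
exactly `r/(r+1)`, the Moran fixation probability. -/
theorem twoVertex_nonstationary_moran_fixation (c r a m : ℝ)
    (hc : 0 < c) (hr : 0 < r) (hcr : ¬(c = 1 ∧ r = 1))
    (ha : min 1 r / (r + 1) ≤ a) (ha' : a ≤ max 1 r / (r + 1))
    (hm : m = (a * (r + 1) - r) / (a * (r + 1) * (1 - c) + c - r)) :
    r * a * (1 - m) / (m * c + r * (1 - m)) + r * m * (1 - a) / ((1 - m) / c + r * m)
      = r / (r + 1) := by
  have hr1 : (0:ℝ) < r + 1 := by linarith
  by_cases hre : r = 1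
  · -- r = 1 : then a = 1/2 and m = 0
    subst hre
    have hmin : min (1:ℝ) 1 = 1 := by norm_num
    have hmax : max (1:ℝ) 1 = 1 := by norm_num
    rw [hmin] at ha
    rw [hmax] at ha'
    have haeq : a = 1/2 := by linarith
    have hnum : a * (1 + 1) - 1 = 0 := by rw [haeq]; norm_num
    have hm0 : m = 0 := by rw [hm, hnum, zero_div]
    rw [hm0, haeq]
    norm_num
  · -- r ≠ 1
    set N : ℝ := a * (r + 1) - r with hN
    set M : ℝ := 1 - a * (r + 1) with hM
    have hDexpr : a * (r + 1) * (1 - c) + c - r = N + c * M := by rw [hN, hM]; ring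
    set D : ℝ := N + c * M with hD
    -- bounds on a
    have h0a : 0 < a := lt_of_lt_of_le (div_pos (lt_min one_pos hr) hr1) ha
    have ha1 : a < 1 := lt_of_le_of_lt ha' (by
      rw [div_lt_one hr1]
      rcases le_total (1:ℝ) r with h | h
      · rw [max_eq_right h]; linarith
      · rw [max_eq_left h]; linarith)
    -- D ≠ 0
    have hDne : D ≠ 0 := by
      rcases lt_or_gt_of_ne hre with h | h
      · -- r < 1 : min = r, max = 1, N ≥ 0, M ≥ 0, not both 0
        have hminr : min (1:ℝ) r = r := min_eq_right h.le
        have hmax1 : max (1:ℝ) r = 1 := max_eq_left h.le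
        rw [hminr, div_le_iff₀ hr1] at ha
        rw [hmax1] at ha'
        have hNpos : 0 ≤ N := by rw [hN]; nlinarith
        have hMpos : 0 ≤ M := by
          rw [hM]
          have h' : a * (r + 1) ≤ 1 := (le_div_iff₀ hr1).mp ha'
          linarith
        intro h0
        have hcM : c * M = 0 := by nlinarith
        have hM0 : M = 0 := by
          rcases mul_eq_zero.mp hcM with h' | h'
          · exact absurd h' hc.ne'
          · exact h'
        have hN0 : N = 0 := by rw [hD] at h0; linarith [hcM]
        rw [hM] at hM0; rw [hN] at hN0
        apply hre; nlinarith
      · -- r > 1 : min = 1, max = r, N ≤ 0, M ≤ 0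
        have hmin1 : min (1:ℝ) r = 1 := min_eq_left h.le
        have hmaxr : max (1:ℝ) r = r := max_eq_right h.le
        rw [hmin1, div_le_iff₀ hr1] at ha
        rw [hmaxr, le_div_iff₀ hr1] at ha'
        have hNneg : N ≤ 0 := by rw [hN]; nlinarith
        have hMneg : M ≤ 0 := by rw [hM]; nlinarith
        intro h0
        have hcM : c * M = 0 := by nlinarith
        have hM0 : M = 0 := by
          rcases mul_eq_zero.mp hcM with h' | h'
          · exact absurd h' hc.ne'
          · exact h'
        have hN0 : N = 0 := by rw [hD] at h0; linarith [hcM]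
        rw [hM] at hM0; rw [hN] at hN0
        apply hre; nlinarith
    have hmND : m = N / D := by rw [hm, hDexpr]
    have h3 : 1 - m = c * M / D := by
      rw [hmND]
      field_simp
      rw [hD]; ring
    have h1 : m * c + r * (1 - m) = c * (a * (r + 1) * (1 - r)) / D := by
      rw [h3, hmND]
      field_simp
      rw [hN, hM]; ring
    have h2 : (1 - m) / c + r * m = ((1 - r) * (r + 1) * (1 - a)) / D := by
      rw [h3, hmND]
      field_simp
      rw [hN, hM]; ring
    have hane : a ≠ 0 := h0a.ne'
    have ha1ne : (1:ℝ) - a ≠ 0 := by intro h'; apply ha1.ne; linarith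
    have hr1ne : (1:ℝ) - r ≠ 0 := fun h' => hre (by linarith)
    have hrne : r + 1 ≠ 0 := hr1.ne'
    have hcne : c ≠ 0 := hc.ne'
    rw [h1, h2, h3, hmND]
    have hZne : (r + 1) * (1 - r) ≠ 0 := mul_ne_zero hrne hr1ne
    have hYne : c * (a * (r + 1) * (1 - r)) / D ≠ 0 :=
      div_ne_zero (mul_ne_zero hcne (mul_ne_zero (mul_ne_zero hane hrne) hr1ne)) hDne
    have hWne : (1 - r) * (r + 1) * (1 - a) / D ≠ 0 :=
      div_ne_zero (mul_ne_zero (mul_ne_zero hr1ne hrne) ha1ne) hDne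
    have t1 : r * a * (c * M / D) / (c * (a * (r + 1) * (1 - r)) / D)
        = r * M / ((r + 1) * (1 - r)) := by
      rw [div_eq_div_iff hYne hZne]
      field_simp
    have t2 : r * (N / D) * (1 - a) / ((1 - r) * (r + 1) * (1 - a) / D)
        = r * N / ((r + 1) * (1 - r)) := by
      rw [div_eq_div_iff hWne hZne]
      field_simp
    rw [t1, t2, ← add_div, div_eq_div_iff hZne hrne, hM, hN]
    ring
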